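/- Let n ≥ 1 and let I = {(i,j) ∈ ℤ² : 0 ≤ i,j ≤ 4n-1, i even, i+j ≤ 4n-1}. The number of pairs (i,j) ∈ I such that there exists a distinct pair (i',j') ∈ I with i + 2nj = i' + 2nj' and j' = j + 1 equals n(n+1). Consequently, the image of I under the map (i,j) ↦ i + 2nj has cardinality exactly 2n(2n+1) - n(n+1) = n(3n+1). -/
import Mathlib

open Finset

private lemma stmt9_sum_helper (m C : ℕ) (h : 2 * m ≤ C) :
    ∑ i ∈ Finset.range (2 * m), (if Even i then C - i else 0)
      = m * C - m * m + m := by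
  induction m with
  | zero => simp
  | succ k ih =>
    have hk : 2 * k ≤ C := by omega
    rw [show 2 * (k + 1) = (2 * k) + 1 + 1 by ring, Finset.sum_range_succ,
      Finset.sum_range_succ, ih hk]
    have h1 : Even (2 * k) := even_two_mul k
    have h2 : ¬ Even (2 * k + 1) := by simp [Nat.even_add_one, h1]
    rw [if_pos h1, if_neg h2]
    have hbc : k * k ≤ k * C := Nat.mul_le_mul_left _ (by omega)
    have e1 : (k + 1) * C = k * C + C := by ring
    have e2 : (k + 1) * (k + 1) = k * k + 2 * k + 1 := by ring
    set a := k * C with ha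
    set b := k * k with hb
    rw [e1, e2]
    omega

private lemma stmt9_card_filter_prod (M : ℕ) (P : ℕ → ℕ → Prop) [∀ i j, Decidable (P i j)] :
    ((Finset.range M ×ˢ Finset.range M).filter (fun p => P p.1 p.2)).card
      = ∑ i ∈ Finset.range M, ((Finset.range M).filter (fun j => P i j)).card := by
  rw [Finset.card_filter, Finset.sum_product]
  exact Finset.sum_congr rfl (fun i _ => (Finset.card_filter _ _).symm)

/-- in the index set `I`, the number of pairs `(i,j)` colliding with a
distinct pair `(i',j')` (same value of `i + 2nj`, with `j' = j+1`) is `n(n+1)`, and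
the image of `I` under `(i,j) ↦ i + 2nj` has cardinality `n(3n+1)`. -/
theorem stmt_9 (n : ℕ) (hn : 1 ≤ n)
    (S : Finset (ℕ × ℕ))
    (hS : S = (Finset.range (4 * n) ×ˢ Finset.range (4 * n)).filter
      (fun p : ℕ × ℕ => Even p.1 ∧ p.1 + p.2 ≤ 4 * n - 1)) :
    (S.filter (fun p : ℕ × ℕ => ∃ q ∈ S, q ≠ p ∧
        p.1 + 2 * n * p.2 = q.1 + 2 * n * q.2 ∧ q.2 = p.2 + 1)).card = n * (n + 1) ∧
    (S.image (fun p : ℕ × ℕ => p.1 + 2 * n * p.2)).card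
      = 2 * n * (2 * n + 1) - n * (n + 1) ∧
    2 * n * (2 * n + 1) - n * (n + 1) = n * (3 * n + 1) := by
  have hmem : ∀ p : ℕ × ℕ, p ∈ S ↔
      p.1 < 4 * n ∧ p.2 < 4 * n ∧ Even p.1 ∧ p.1 + p.2 ≤ 4 * n - 1 := by
    intro p
    simp [hS, Finset.mem_filter, Finset.mem_product, Finset.mem_range, and_assoc]
  -- cardinality of S
  have hScard : S.card = 2 * n * (2 * n + 1) := by
    rw [hS, stmt9_card_filter_prod (4 * n) (fun i j => Even i ∧ i + j ≤ 4 * n - 1)]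
    have hinner : ∀ i ∈ Finset.range (4 * n),
        ((Finset.range (4 * n)).filter (fun j => Even i ∧ i + j ≤ 4 * n - 1)).card
          = if Even i then 4 * n - i else 0 := by
      intro i hi
      rw [Finset.mem_range] at hi
      by_cases hE : Even i
      · rw [if_pos hE]
        have : (Finset.range (4 * n)).filter (fun j => Even i ∧ i + j ≤ 4 * n - 1)
            = Finset.range (4 * n - i) := by
          ext j
          simp only [Finset.mem_filter, Finset.mem_range, hE, true_and]
          omega
        rw [this, Finset.card_range]
      · rw [if_neg hE]
        simp [Finset.filter_eq_empty_iff, hE]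
    rw [Finset.sum_congr rfl hinner,
      show (4 : ℕ) * n = 2 * (2 * n) by ring,
      stmt9_sum_helper (2 * n) (2 * (2 * n)) (le_refl _)]
    have hle : 2 * n * (2 * n) ≤ 2 * n * (2 * (2 * n)) :=
      Nat.mul_le_mul_left _ (by omega)
    zify [hle]
    ring
  -- cardinality of the "low" part L
  set L : Finset (ℕ × ℕ) := S.filter (fun p => p.1 < 2 * n) with hL
  have hLcard : L.card = n * (3 * n + 1) := by
    rw [hL, hS, Finset.filter_filter,
      stmt9_card_filter_prod (4 * n)
        (fun i j => (Even i ∧ i + j ≤ 4 * n - 1) ∧ i < 2 * n)]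
    have hinner : ∀ i ∈ Finset.range (4 * n),
        ((Finset.range (4 * n)).filter
            (fun j => (Even i ∧ i + j ≤ 4 * n - 1) ∧ i < 2 * n)).card
          = if Even i ∧ i < 2 * n then 4 * n - i else 0 := by
      intro i hi
      rw [Finset.mem_range] at hi
      by_cases hE : Even i ∧ i < 2 * n
      · rw [if_pos hE]
        have : (Finset.range (4 * n)).filter
              (fun j => (Even i ∧ i + j ≤ 4 * n - 1) ∧ i < 2 * n)
            = Finset.range (4 * n - i) := by
          ext j
          simp only [Finset.mem_filter, Finset.mem_range, hE.1, hE.2, true_and, and_true]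
          omega
        rw [this, Finset.card_range]
      · rw [if_neg hE]
        rw [Finset.card_eq_zero, Finset.filter_eq_empty_iff]
        intro j _
        tauto
    rw [Finset.sum_congr rfl hinner]
    have hsub : Finset.range (2 * n) ⊆ Finset.range (4 * n) :=
      Finset.range_subset_range.mpr (by omega)
    rw [← Finset.sum_subset hsub (by
      intro i _ hni
      rw [Finset.mem_range] at hni
      rw [if_neg (by omega)])]
    have : ∀ i ∈ Finset.range (2 * n),
        (if Even i ∧ i < 2 * n then 4 * n - i else 0)
          = if Even i then 4 * n - i else 0 := by
      intro i hi
      rw [Finset.mem_range] at hi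
      by_cases hE : Even i
      · rw [if_pos ⟨hE, hi⟩, if_pos hE]
      · rw [if_neg (by tauto), if_neg hE]
    rw [Finset.sum_congr rfl this, stmt9_sum_helper n (4 * n) (by omega)]
    have hle : n * n ≤ n * (4 * n) := Nat.mul_le_mul_left _ (by omega)
    zify [hle]
    ring
  -- the collision set is exactly the "high" part
  have hfilter : S.filter (fun p : ℕ × ℕ => ∃ q ∈ S, q ≠ p ∧
        p.1 + 2 * n * p.2 = q.1 + 2 * n * q.2 ∧ q.2 = p.2 + 1)
      = S.filter (fun p => 2 * n ≤ p.1) := by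
    ext p
    simp only [Finset.mem_filter]
    constructor
    · rintro ⟨hp, q, hq, hne, heq, hj⟩
      refine ⟨hp, ?_⟩
      rw [hj, mul_add, mul_one] at heq
      set a := 2 * n * p.2 with ha
      omega
    · rintro ⟨hp, hge⟩
      rw [hmem] at hp
      obtain ⟨h1, h2, hE, h3⟩ := hp
      refine ⟨(hmem p).mpr ⟨h1, h2, hE, h3⟩, (p.1 - 2 * n, p.2 + 1), ?_, ?_, ?_, rfl⟩
      · rw [hmem]
        obtain ⟨a, haa⟩ := hE
        exact ⟨by omega, by omega, ⟨a - n, by omega⟩, by simp; omega⟩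
      · simp only [ne_eq, Prod.ext_iff, not_and]
        intro _
        omega
      · show p.1 + 2 * n * p.2 = p.1 - 2 * n + 2 * n * (p.2 + 1)
        rw [mul_add, mul_one]
        set a := 2 * n * p.2 with ha
        omega
  -- cardinality of the collision set
  have hhigh : (S.filter (fun p => 2 * n ≤ p.1)).card = n * (n + 1) := by
    have hpart := Finset.card_filter_add_card_filter_not
      (s := S) (p := fun p : ℕ × ℕ => 2 * n ≤ p.1)
    have hneg : S.filter (fun p : ℕ × ℕ => ¬ 2 * n ≤ p.1) = L := by
      rw [hL]
      apply Finset.filter_congr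
      intro p _
      simp [not_le]
    rw [hneg, hLcard, hScard] at hpart
    have hid : 2 * n * (2 * n + 1) = n * (3 * n + 1) + n * (n + 1) := by ring
    set A := n * (3 * n + 1) with hA
    set B := n * (n + 1) with hB
    omega
  -- the image equals the image of L
  have himg : S.image (fun p : ℕ × ℕ => p.1 + 2 * n * p.2)
      = L.image (fun p : ℕ × ℕ => p.1 + 2 * n * p.2) := by
    apply Finset.Subset.antisymm
    · intro v hv
      rw [Finset.mem_image] at hv ⊢
      obtain ⟨p, hp, rfl⟩ := hv
      by_cases h : p.1 < 2 * n
      · exact ⟨p, Finset.mem_filter.mpr ⟨hp, h⟩, rfl⟩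
      · rw [hmem] at hp
        obtain ⟨h1, h2, hE, h3⟩ := hp
        refine ⟨(p.1 - 2 * n, p.2 + 1), Finset.mem_filter.mpr ⟨(hmem _).mpr ?_, ?_⟩, ?_⟩
        · obtain ⟨a, haa⟩ := hE
          exact ⟨by omega, by omega, ⟨a - n, by omega⟩, by simp; omega⟩
        · simp; omega
        · show p.1 - 2 * n + 2 * n * (p.2 + 1) = p.1 + 2 * n * p.2
          rw [mul_add, mul_one]
          set a := 2 * n * p.2 with ha
          omega
    · exact Finset.image_subset_image (Finset.filter_subset _ _)
  have hinj : Set.InjOn (fun p : ℕ × ℕ => p.1 + 2 * n * p.2) L := by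
    intro p hp q hq h
    simp only at h
    have hpL := (Finset.mem_filter.mp hp).2
    have hqL := (Finset.mem_filter.mp hq).2
    have hn0 : 0 < 2 * n := by omega
    have e1 : (p.1 + 2 * n * p.2) % (2 * n) = p.1 := by
      rw [Nat.add_mul_mod_self_left, Nat.mod_eq_of_lt hpL]
    have e2 : (q.1 + 2 * n * q.2) % (2 * n) = q.1 := by
      rw [Nat.add_mul_mod_self_left, Nat.mod_eq_of_lt hqL]
    have d1 : (p.1 + 2 * n * p.2) / (2 * n) = p.2 := by
      rw [Nat.add_mul_div_left _ _ hn0, Nat.div_eq_of_lt hpL, zero_add]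
    have d2 : (q.1 + 2 * n * q.2) / (2 * n) = q.2 := by
      rw [Nat.add_mul_div_left _ _ hn0, Nat.div_eq_of_lt hqL, zero_add]
    have : p.1 = q.1 := by rw [← e1, ← e2, h]
    have : p.2 = q.2 := by rw [← d1, ← d2, h]
    exact Prod.ext ‹p.1 = q.1› ‹p.2 = q.2›
  have hthird : 2 * n * (2 * n + 1) - n * (n + 1) = n * (3 * n + 1) := by
    rw [show 2 * n * (2 * n + 1) = n * (n + 1) + n * (3 * n + 1) by ring,
      Nat.add_sub_cancel_left]
  refine ⟨?_, ?_, hthird⟩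
  · rw [hfilter, hhigh]
  · rw [himg, Finset.card_image_of_injOn hinj, hLcard, hthird]
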